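/- arXiv:1109.0827 — 2 statements merged into one kernel-verified Lean document; each statement's English description precedes it below -/
import Mathlib

section
/- Let l ≥ 2 be an integer, M = 2^l, and let s_k = exp(2πik/M) for 0 ≤ k ≤ M - 1 denote the points of the M-PSK signal set. Define the relay labelling X_r by X_r(k) = s_k if k is even and X_r(k) = s_{(k + M/2) mod M} if k is odd. Then for all k, k' ∈ {0, …, M - 1} with k ≠ k', writing n = |k - k'|: |X_r(k) - X_r(k')| = 2·|sin(π·n/M)| if n is even, and |X_r(k) - X_r(k')| = 2·|cos(π·n/M)| if n is odd. -/
open Real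

lemma abs_exp_sub_exp_aux (a b : ℝ) :
    ‖Complex.exp (a * Complex.I) - Complex.exp (b * Complex.I)‖
      = 2 * |Real.sin ((a - b) / 2)| := by
  have h : Complex.exp (a * Complex.I) - Complex.exp (b * Complex.I)
      = Complex.exp ((((a+b)/2 : ℝ)) * Complex.I)
          * (2 * Real.sin ((a-b)/2) * Complex.I) := by
    have e1 : (a : ℂ) * Complex.I
        = ((a+b)/2 : ℝ) * Complex.I + (((a-b)/2 : ℝ) : ℂ) * Complex.I := by
      push_cast; ring
    have e2 : (b : ℂ) * Complex.I
        = ((a+b)/2 : ℝ) * Complex.I + ((-((a-b)/2) : ℝ) : ℂ) * Complex.I := by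
      push_cast; ring
    rw [e1, e2, Complex.exp_add, Complex.exp_add, ← mul_sub]
    congr 1
    rw [Complex.exp_mul_I, Complex.exp_mul_I]
    push_cast
    rw [Complex.cos_neg, Complex.sin_neg]
    ring
  rw [h, norm_mul, Complex.norm_exp_ofReal_mul_I, one_mul, norm_mul, norm_mul,
    Complex.norm_I, mul_one, Complex.norm_real, Real.norm_eq_abs, Complex.norm_two]

lemma dist_psk_aux (M : ℕ) (a b : ℝ) :
    ‖Complex.exp (((2*π*a/M : ℝ)) * Complex.I)
        - Complex.exp (((2*π*b/M : ℝ)) * Complex.I)‖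
      = 2 * |Real.sin (π * (a - b) / M)| := by
  rw [abs_exp_sub_exp_aux]
  congr 2
  ring

/-- Distances under the proposed relay labelling of `2^l`-PSK:
with `s k = exp(2πik/M)` and `X_r k = s k` for even `k`, `X_r k = s ((k + M/2) % M)`
for odd `k`, the distance `|X_r k - X_r k'|` equals `2|sin(πn/M)|` for even `n = |k - k'|`
and `2|cos(πn/M)|` for odd `n`. -/
theorem relay_labelling_distances (l : ℕ) (hl : 2 ≤ l) (M : ℕ) (hM : M = 2 ^ l)
    (s : ℕ → ℂ)
    (hs : ∀ k, s k = Complex.exp (2 * (π : ℂ) * Complex.I * k / M))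
    (Xr : ℕ → ℂ)
    (hXr : ∀ k, Xr k = if Even k then s k else s ((k + M / 2) % M)) :
    ∀ k k' : ℕ, k < M → k' < M → k ≠ k' →
      (Even ((k : ℤ) - k').natAbs →
        ‖Xr k - Xr k'‖
          = 2 * |Real.sin (π * ((k : ℤ) - k').natAbs / M)|) ∧
      (Odd ((k : ℤ) - k').natAbs →
        ‖Xr k - Xr k'‖
          = 2 * |Real.cos (π * ((k : ℤ) - k').natAbs / M)|) := by
  intro k k' hk hk' hne
  have hM2 : M / 2 * 2 = M := by
    subst hM; exact Nat.div_mul_cancel (dvd_pow_self 2 (by omega))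
  have hM0 : 0 < M := by subst hM; positivity
  have hMR : (M : ℝ) ≠ 0 := Nat.cast_ne_zero.mpr hM0.ne'
  have hhalf : ((M/2 : ℕ) : ℝ) = (M : ℝ)/2 := by
    have := congrArg (Nat.cast : ℕ → ℝ) hM2; push_cast at this; linarith
  -- complex exp formulas
  have hsC : ∀ m : ℕ, s m = Complex.exp (((2*π*(m:ℝ)/M : ℝ)) * Complex.I) := by
    intro m; rw [hs]; congr 1; push_cast; ring
  have hmod : ∀ m : ℕ, s (m % M) = Complex.exp (((2*π*(m:ℝ)/M : ℝ)) * Complex.I) := by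
    intro m
    rw [hsC]
    have hm := Nat.div_add_mod m M
    set q := m / M with hq
    have hcast : ((m % M : ℕ):ℝ) = (m:ℝ) - q * M := by
      have := congrArg (Nat.cast : ℕ → ℝ) hm; push_cast at this; linarith
    have hr : (2*π*((m % M : ℕ):ℝ)/M : ℝ) = 2*π*(m:ℝ)/M - (q:ℝ)*(2*π) := by
      rw [hcast]; field_simp
    have hc : ((2*π*((m % M : ℕ):ℝ)/M : ℝ) : ℂ) * Complex.I
        = ((2*π*(m:ℝ)/M : ℝ) : ℂ) * Complex.I + (-(q:ℤ) : ℤ) * (2*(π:ℂ)*Complex.I) := by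
      rw [hr]; push_cast; ring
    rw [hc, Complex.exp_add, Complex.exp_int_mul_two_pi_mul_I, mul_one]
  have hXe : ∀ j, Even j → Xr j = Complex.exp (((2*π*(j:ℝ)/M : ℝ)) * Complex.I) := by
    intro j hj; rw [hXr, if_pos hj, hsC]
  have hXo : ∀ j, ¬ Even j →
      Xr j = Complex.exp (((2*π*((j:ℝ) + (M:ℝ)/2)/M : ℝ)) * Complex.I) := by
    intro j hj
    rw [hXr, if_neg hj, hmod]
    congr 3
    push_cast [hhalf]
    ring
  -- n facts
  set n := ((k : ℤ) - k').natAbs with hn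
  have hncast : ((n : ℕ) : ℝ) = |(k:ℝ) - k'| := by
    rw [hn, Nat.cast_natAbs, Int.cast_abs]; push_cast; ring_nf
  have hsinabs : ∀ x : ℝ, |Real.sin (π * x / M)| = |Real.sin (π * |x| / M)| := by
    intro x
    rcases abs_cases x with ⟨h, _⟩ | ⟨h, _⟩ <;> rw [h]
    simp [mul_neg, neg_div, Real.sin_neg, abs_neg]
  have hcosabs : ∀ x : ℝ, |Real.cos (π * x / M)| = |Real.cos (π * |x| / M)| := by
    intro x
    rcases abs_cases x with ⟨h, _⟩ | ⟨h, _⟩ <;> rw [h]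
    simp [mul_neg, neg_div, Real.cos_neg]
  -- parity case analysis
  by_cases hke : Even k <;> by_cases hk'e : Even k'
  · -- even, even : n even
    have hnpar : Even n := by
      obtain ⟨a, ha⟩ := hke; obtain ⟨b, hb⟩ := hk'e
      rw [hn, Int.natAbs_even]; exact ⟨(a : ℤ) - b, by push_cast [ha, hb]; ring⟩
    constructor
    · intro _
      rw [hXe k hke, hXe k' hk'e, dist_psk_aux, hsinabs, ← hncast]
    · intro hodd; exact absurd hnpar (Nat.not_even_iff_odd.mpr hodd)
  · -- even, odd : n odd
    have hnpar : Odd n := by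
      obtain ⟨a, ha⟩ := hke
      obtain ⟨b, hb⟩ := Nat.not_even_iff_odd.mp hk'e
      rw [hn, Int.natAbs_odd]
      exact ⟨(a : ℤ) - b - 1, by push_cast [ha, hb]; ring⟩
    constructor
    · intro heven; exact absurd hnpar (Nat.not_odd_iff_even.mpr heven)
    · intro _
      rw [hXe k hke, hXo k' hk'e, dist_psk_aux]
      have harg : π * ((k:ℝ) - ((k':ℝ) + (M:ℝ)/2)) / M
          = π * ((k:ℝ) - k') / M - π/2 := by field_simp; ring
      rw [harg, Real.sin_sub_pi_div_two, abs_neg, hcosabs, ← hncast]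
  · -- odd, even : n odd
    have hnpar : Odd n := by
      obtain ⟨a, ha⟩ := Nat.not_even_iff_odd.mp hke
      obtain ⟨b, hb⟩ := hk'e
      rw [hn, Int.natAbs_odd]
      exact ⟨(a : ℤ) - b, by push_cast [ha, hb]; ring⟩
    constructor
    · intro heven; exact absurd hnpar (Nat.not_odd_iff_even.mpr heven)
    · intro _
      rw [hXo k hke, hXe k' hk'e, dist_psk_aux]
      have harg : π * (((k:ℝ) + (M:ℝ)/2) - (k':ℝ)) / M
          = π * ((k:ℝ) - k') / M + π/2 := by field_simp; ring
      rw [harg, Real.sin_add_pi_div_two, hcosabs, ← hncast]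
  · -- odd, odd : n even
    have hnpar : Even n := by
      obtain ⟨a, ha⟩ := Nat.not_even_iff_odd.mp hke
      obtain ⟨b, hb⟩ := Nat.not_even_iff_odd.mp hk'e
      rw [hn, Int.natAbs_even]; exact ⟨(a : ℤ) - b, by push_cast [ha, hb]; ring⟩
    constructor
    · intro _
      rw [hXo k hke, hXo k' hk'e, dist_psk_aux]
      have harg : (((k:ℝ) + (M:ℝ)/2) - ((k':ℝ) + (M:ℝ)/2)) = (k:ℝ) - k' := by ring
      rw [harg, hsinabs, ← hncast]
    · intro hodd; exact absurd hnpar (Nat.not_even_iff_odd.mpr hodd)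
end

section
/- Let l ≥ 2 be an integer, M = 2^l, and let s_k = exp(2πik/M) for 0 ≤ k ≤ M - 1 denote the points of the M-PSK signal set. Define X_{s1}(k) = s_k and the relay labelling X_r by X_r(k) = s_k if k is even and X_r(k) = s_{(k + M/2) mod M} if k is odd. Then the minimum over all pairs k, k' ∈ {0, …, M - 1} with k ≠ k' of |X_{s1}(k) - X_{s1}(k')|² · |X_r(k) - X_r(k')|² equals min(16·sin⁴(2π/M), 4·sin²(2π/M)). -/
open Real

lemma abs_exp_sub_exp (x y : ℝ) :
    ‖Complex.exp (x * Complex.I) - Complex.exp (y * Complex.I)‖ ^ 2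
      = 4 * Real.sin ((x - y) / 2) ^ 2 := by
  rw [Complex.sq_norm]
  simp only [Complex.normSq_apply, Complex.sub_re, Complex.sub_im,
    Complex.exp_ofReal_mul_I_re, Complex.exp_ofReal_mul_I_im]
  have h2 : Real.cos (x - y) = 2 * Real.cos ((x - y) / 2) ^ 2 - 1 := by
    have := Real.cos_two_mul ((x - y) / 2)
    rw [show 2 * ((x - y) / 2) = x - y by ring] at this
    linarith
  have h3 : Real.cos (x - y) = Real.cos x * Real.cos y + Real.sin x * Real.sin y :=
    Real.cos_sub x y
  nlinarith [Real.sin_sq_add_cos_sq x, Real.sin_sq_add_cos_sq y,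
    Real.sin_sq_add_cos_sq ((x - y) / 2)]

lemma sin_sq_congr (N : ℕ) (hN : 0 < N) (a b : ℤ) (h : (N : ℤ) ∣ (a - b)) :
    Real.sin (π * a / N) ^ 2 = Real.sin (π * b / N) ^ 2 := by
  obtain ⟨t, ht⟩ := h
  have ha : (a : ℝ) = b + N * t := by
    have : a = b + N * t := by linarith [ht]
    exact_mod_cast congrArg (Int.cast : ℤ → ℝ) this
  have hN' : (N : ℝ) ≠ 0 := Nat.cast_ne_zero.2 hN.ne'
  rw [ha, show π * ((b : ℝ) + N * t) / N = π * b / N + t * π by field_simp,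
    Real.sin_add_int_mul_pi]
  have h1 : ((-1 : ℝ) ^ t) ^ 2 = 1 := by
    rcases Int.even_or_odd t with h | h
    · rw [h.neg_one_zpow]; norm_num
    · rw [Odd.neg_one_zpow h]; norm_num
  rw [mul_pow, h1, one_mul]

lemma sin_le_sin' {x y : ℝ} (hy : 0 ≤ y) (hyx : y ≤ x) (hx : x ≤ π - y) :
    Real.sin y ≤ Real.sin x := by
  have hpi := Real.pi_pos
  rcases le_total x (π / 2) with h | h
  · exact Real.strictMonoOn_sin.monotoneOn ⟨by linarith, by linarith⟩
      ⟨by linarith, h⟩ hyx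
  · rw [← Real.sin_pi_sub x]
    exact Real.strictMonoOn_sin.monotoneOn ⟨by linarith, by linarith⟩
      ⟨by linarith, by linarith⟩ (by linarith)

lemma abs_s_sub (M : ℕ) (a b : ℕ) :
    ‖Complex.exp (2 * (π : ℂ) * Complex.I * a / M)
        - Complex.exp (2 * (π : ℂ) * Complex.I * b / M)‖ ^ 2
      = 4 * Real.sin (π * ((a : ℝ) - b) / M) ^ 2 := by
  have e1 : (2 * (π : ℂ) * Complex.I * a / M) = ((2 * π * a / M : ℝ) : ℂ) * Complex.I := by
    push_cast; ring
  have e2 : (2 * (π : ℂ) * Complex.I * b / M) = ((2 * π * b / M : ℝ) : ℂ) * Complex.I := by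
    push_cast; ring
  rw [e1, e2, abs_exp_sub_exp]
  congr 2
  rcases eq_or_ne (M : ℝ) 0 with h | h
  · simp [h]
  · field_simp

lemma sin_sq_lb_even (M : ℕ) (hM4 : 4 ≤ M) (h2M : (2:ℤ) ∣ (M:ℤ)) (d : ℤ)
    (hd : (2:ℤ) ∣ d) (hd0 : ¬ (M:ℤ) ∣ d) :
    Real.sin (2 * π / M) ^ 2 ≤ Real.sin (π * (d : ℝ) / M) ^ 2 := by
  have hpi := Real.pi_pos
  have hM0 : 0 < M := by omega
  have hMr : (0:ℝ) < M := by exact_mod_cast hM0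
  have hM4' : (4:ℤ) ≤ (M:ℤ) := by exact_mod_cast hM4
  set r := d % (M:ℤ) with hr
  have hr0 : 0 ≤ r := Int.emod_nonneg d (by exact_mod_cast hM0.ne')
  have hrM : r < M := Int.emod_lt_of_pos d (by exact_mod_cast hM0)
  have hr2 : r % 2 = 0 := by
    rw [hr, Int.emod_emod_of_dvd d h2M]
    exact Int.emod_eq_zero_of_dvd hd
  have hrne : r ≠ 0 := fun h => hd0 (Int.dvd_of_emod_eq_zero (by rw [← hr]; exact h))
  have h2r : 2 ≤ r ∧ r ≤ (M:ℤ) - 2 := by omega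
  have hcongr := sin_sq_congr M hM0 d r ⟨d / M, by rw [hr, Int.emod_def]; ring⟩
  rw [hcongr]
  have hrr : (2:ℝ) ≤ (r:ℝ) := by exact_mod_cast h2r.1
  have hrr2 : (r:ℝ) ≤ (M:ℝ) - 2 := by exact_mod_cast h2r.2
  have hsle : Real.sin (2 * π / M) ≤ Real.sin (π * (r : ℝ) / M) := by
    apply sin_le_sin'
    · positivity
    · rw [div_le_div_iff_of_pos_right hMr]; nlinarith
    · rw [show π - 2*π/(M:ℝ) = (π * M - 2*π)/M by field_simp,
        div_le_div_iff_of_pos_right hMr]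
      nlinarith
  have hs0 : 0 ≤ Real.sin (2 * π / M) := by
    apply Real.sin_nonneg_of_nonneg_of_le_pi
    · positivity
    · rw [div_le_iff₀ hMr]
      have hM4r : (4:ℝ) ≤ (M:ℝ) := by exact_mod_cast hM4
      nlinarith
  exact pow_le_pow_left₀ hs0 hsle 2

lemma sin_sq_lb_odd (M H : ℕ) (hH0 : 0 < H) (h2H : (2:ℤ) ∣ (H:ℤ)) (hMH : M = 2 * H)
    (d : ℤ) (hd : d % 2 = 1) :
    Real.sin (2 * π / M) ^ 2 ≤ Real.sin (2 * (π * (d : ℝ) / M)) ^ 2 := by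
  have hpi := Real.pi_pos
  have hHr : (0:ℝ) < H := by exact_mod_cast hH0
  have hMr : (M:ℝ) = 2 * H := by exact_mod_cast hMH
  have h2u : 2 * (π * (d : ℝ) / M) = π * (d : ℝ) / H := by
    rw [hMr]; field_simp
  have h2pi : 2 * π / (M:ℝ) = π * ((1:ℤ) : ℝ) / H := by
    rw [hMr]; push_cast; field_simp
  rw [h2u, h2pi]
  set r := d % (H:ℤ) with hr
  have hr0 : 0 ≤ r := Int.emod_nonneg d (by exact_mod_cast hH0.ne')
  have hrH : r < H := Int.emod_lt_of_pos d (by exact_mod_cast hH0)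
  have hr2 : r % 2 = 1 := by rw [hr, Int.emod_emod_of_dvd d h2H]; exact hd
  have h1r : 1 ≤ r ∧ r ≤ (H:ℤ) - 1 := by omega
  have hcongr := sin_sq_congr H hH0 d r ⟨d / H, by rw [hr, Int.emod_def]; ring⟩
  rw [hcongr]
  have hrr : (1:ℝ) ≤ (r:ℝ) := by exact_mod_cast h1r.1
  have hrr2 : (r:ℝ) ≤ (H:ℝ) - 1 := by exact_mod_cast h1r.2
  have hsle : Real.sin (π * ((1:ℤ):ℝ) / H) ≤ Real.sin (π * (r : ℝ) / H) := by
    apply sin_le_sin'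
    · positivity
    · rw [div_le_div_iff_of_pos_right hHr]; push_cast; nlinarith
    · rw [show π - π*((1:ℤ):ℝ)/(H:ℝ) = (π * H - π)/H by push_cast; field_simp,
        div_le_div_iff_of_pos_right hHr]
      nlinarith
  have hs0 : 0 ≤ Real.sin (π * ((1:ℤ):ℝ) / H) := by
    apply Real.sin_nonneg_of_nonneg_of_le_pi
    · positivity
    · push_cast
      rw [div_le_iff₀ hHr]
      have hH1 : (1:ℝ) ≤ (H:ℝ) := by exact_mod_cast hH0
      nlinarith
  exact pow_le_pow_left₀ hs0 hsle 2

/-- For the proposed labelling scheme on `2^l`-PSK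
(`X_{s1} k = s k`; `X_r k = s k` for even `k`, `s ((k + M/2) % M)` for odd `k`),
the minimum over pairs `k ≠ k'` of `|X_{s1} k - X_{s1} k'|² |X_r k - X_r k'|²`
equals `min(16 sin⁴(2π/M), 4 sin²(2π/M))`. -/
theorem labelling_scheme_product_distance (l : ℕ) (hl : 2 ≤ l) (M : ℕ) (hM : M = 2 ^ l)
    (s : ℕ → ℂ)
    (hs : ∀ k, s k = Complex.exp (2 * (π : ℂ) * Complex.I * k / M))
    (Xs1 : ℕ → ℂ) (hXs1 : ∀ k, Xs1 k = s k)
    (Xr : ℕ → ℂ)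
    (hXr : ∀ k, Xr k = if Even k then s k else s ((k + M / 2) % M)) :
    IsLeast {x : ℝ | ∃ k k' : ℕ, k < M ∧ k' < M ∧ k ≠ k' ∧
        x = ‖Xs1 k - Xs1 k'‖ ^ 2 * ‖Xr k - Xr k'‖ ^ 2}
      (min (16 * Real.sin (2 * π / M) ^ 4) (4 * Real.sin (2 * π / M) ^ 2)) := by
  have hpi := Real.pi_pos
  have hM4 : 4 ≤ M := by
    rw [hM]
    calc (4:ℕ) = 2 ^ 2 := by norm_num
      _ ≤ 2 ^ l := Nat.pow_le_pow_right (by norm_num) hl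
  have hM0 : 0 < M := by omega
  have h2M : 2 ∣ M := by rw [hM]; exact dvd_pow_self 2 (by omega)
  set H := M / 2 with hH
  have hMH : M = 2 * H := by omega
  have hH0 : 0 < H := by omega
  have h2H : 2 ∣ H := by
    have hl1 : l - 1 + 1 = l := by omega
    have hMM : M = 2 ^ (l - 1) * 2 := by rw [hM, ← pow_succ, hl1]
    have hHe : H = 2 ^ (l - 1) := by omega
    rw [hHe]; exact dvd_pow_self 2 (by omega)
  have hMr : (0:ℝ) < M := by exact_mod_cast hM0
  have hMr2 : (M:ℝ) = 2 * (H:ℝ) := by exact_mod_cast hMH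
  have habs : ∀ (a b : ℕ) (d : ℤ), (M:ℤ) ∣ ((a:ℤ) - b - d) →
      ‖s a - s b‖ ^ 2 = 4 * Real.sin (π * (d:ℝ) / M) ^ 2 := by
    intro a b d hdvd
    rw [hs, hs, abs_s_sub]
    have e : ((a:ℝ) - b) = (((a:ℤ) - b : ℤ) : ℝ) := by push_cast; ring
    rw [e, sin_sq_congr M hM0 _ d hdvd]
  have key : ∀ x : ℤ, (M:ℤ) ∣ (x % M - x) :=
    fun x => ⟨-(x / M), by rw [Int.emod_def]; ring⟩
  constructor
  · -- membership
    rcases le_total (16 * Real.sin (2*π/M)^4) (4 * Real.sin (2*π/M)^2) with h | h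
    · rw [min_eq_left h]
      refine ⟨0, 2, by omega, by omega, by omega, ?_⟩
      rw [hXs1, hXs1, hXr, hXr, if_pos Even.zero, if_pos (by decide : Even 2)]
      rw [habs 0 2 (-2) ⟨0, by ring⟩]
      have e : π * ((-2:ℤ):ℝ)/M = -(2*π/M) := by push_cast; ring
      rw [e, Real.sin_neg]
      ring
    · rw [min_eq_right h]
      refine ⟨0, 1, by omega, by omega, by omega, ?_⟩
      rw [hXs1, hXs1, hXr, hXr, if_pos Even.zero, if_neg (by decide : ¬ Even 1)]
      rw [habs 0 1 (-1) ⟨0, by ring⟩]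
      obtain ⟨c, hc⟩ := key ((1:ℤ) + H)
      rw [habs 0 ((1 + H) % M) (-1 - H) ⟨-c, by push_cast; linear_combination -hc⟩]
      have e1 : π * ((-1:ℤ):ℝ)/M = -(π/M) := by push_cast; ring
      have e2 : π * ((-1 - H : ℤ):ℝ)/M = -(π/M + π/2) := by
        push_cast; rw [hMr2]; field_simp; ring
      rw [e1, e2, Real.sin_neg, Real.sin_neg, Real.sin_add_pi_div_two,
        show 2*π/(M:ℝ) = 2*(π/M) by ring, Real.sin_two_mul]
      ring
  · -- lower bound
    rintro x ⟨k, k', hk, hk', hne, rfl⟩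
    rw [hXs1, hXs1, hXr, hXr]
    have hd0 : ((k:ℤ) - k') ≠ 0 := by omega
    have hdabs : |(k:ℤ) - k'| < M := by rw [abs_lt]; omega
    rcases Nat.even_or_odd k with hke | hko <;> rcases Nat.even_or_odd k' with hk'e | hk'o
    · -- even, even
      rw [if_pos hke, if_pos hk'e, habs k k' ((k:ℤ) - k') ⟨0, by ring⟩]
      have h2d : (2:ℤ) ∣ ((k:ℤ) - k') := by
        obtain ⟨a, ha⟩ := hke; obtain ⟨b, hb⟩ := hk'e; omega
      have hnd : ¬ (M:ℤ) ∣ ((k:ℤ) - k') := by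
        intro hdvd
        have h2 := Int.le_of_dvd (abs_pos.2 hd0) ((dvd_abs _ _).2 hdvd)
        omega
      have hb := sin_sq_lb_even M hM4 (by exact_mod_cast h2M) _ h2d hnd
      refine le_trans (min_le_left _ _) ?_
      nlinarith [mul_self_le_mul_self (sq_nonneg (Real.sin (2*π/(M:ℝ)))) hb]
    · -- even, odd
      rw [if_pos hke, if_neg (Nat.not_even_iff_odd.mpr hk'o),
        habs k k' ((k:ℤ) - k') ⟨0, by ring⟩]
      obtain ⟨c, hc⟩ := key ((k':ℤ) + H)
      rw [habs k ((k' + H) % M) ((k:ℤ) - k' - H) ⟨-c, by push_cast; linear_combination -hc⟩]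
      have e2 : π * (((k:ℤ) - k' - H : ℤ):ℝ)/M = π * (((k:ℤ) - k' : ℤ):ℝ)/M - π/2 := by
        push_cast; rw [hMr2]; field_simp
      rw [e2, Real.sin_sub_pi_div_two]
      have hodd : ((k:ℤ) - k') % 2 = 1 := by
        obtain ⟨a, ha⟩ := hke; obtain ⟨b, hb⟩ := hk'o; omega
      have hb := sin_sq_lb_odd M H hH0 (by exact_mod_cast h2H) hMH _ hodd
      refine le_trans (min_le_right _ _) ?_
      calc 4 * Real.sin (2*π/(M:ℝ))^2
          ≤ 4 * Real.sin (2 * (π * (((k:ℤ) - k' : ℤ):ℝ)/M))^2 := by linarith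
        _ = 4 * Real.sin (π * (((k:ℤ) - k' : ℤ):ℝ)/M)^2 *
            (4 * (-Real.cos (π * (((k:ℤ) - k' : ℤ):ℝ)/M))^2) := by
            rw [Real.sin_two_mul]; ring
    · -- odd, even
      rw [if_neg (Nat.not_even_iff_odd.mpr hko), if_pos hk'e,
        habs k k' ((k:ℤ) - k') ⟨0, by ring⟩]
      obtain ⟨c, hc⟩ := key ((k:ℤ) + H)
      rw [habs ((k + H) % M) k' ((k:ℤ) - k' + H) ⟨c, by push_cast; linear_combination hc⟩]
      have e2 : π * (((k:ℤ) - k' + H : ℤ):ℝ)/M = π * (((k:ℤ) - k' : ℤ):ℝ)/M + π/2 := by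
        push_cast; rw [hMr2]; field_simp
      rw [e2, Real.sin_add_pi_div_two]
      have hodd : ((k:ℤ) - k') % 2 = 1 := by
        obtain ⟨a, ha⟩ := hko; obtain ⟨b, hb⟩ := hk'e; omega
      have hb := sin_sq_lb_odd M H hH0 (by exact_mod_cast h2H) hMH _ hodd
      refine le_trans (min_le_right _ _) ?_
      calc 4 * Real.sin (2*π/(M:ℝ))^2
          ≤ 4 * Real.sin (2 * (π * (((k:ℤ) - k' : ℤ):ℝ)/M))^2 := by linarith
        _ = 4 * Real.sin (π * (((k:ℤ) - k' : ℤ):ℝ)/M)^2 *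
            (4 * Real.cos (π * (((k:ℤ) - k' : ℤ):ℝ)/M)^2) := by
            rw [Real.sin_two_mul]; ring
    · -- odd, odd
      rw [if_neg (Nat.not_even_iff_odd.mpr hko), if_neg (Nat.not_even_iff_odd.mpr hk'o),
        habs k k' ((k:ℤ) - k') ⟨0, by ring⟩]
      obtain ⟨c1, hc1⟩ := key ((k:ℤ) + H)
      obtain ⟨c2, hc2⟩ := key ((k':ℤ) + H)
      rw [habs ((k + H) % M) ((k' + H) % M) ((k:ℤ) - k')
        ⟨c1 - c2, by push_cast; linear_combination hc1 - hc2⟩]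
      have h2d : (2:ℤ) ∣ ((k:ℤ) - k') := by
        obtain ⟨a, ha⟩ := hko; obtain ⟨b, hb⟩ := hk'o; omega
      have hnd : ¬ (M:ℤ) ∣ ((k:ℤ) - k') := by
        intro hdvd
        have h2 := Int.le_of_dvd (abs_pos.2 hd0) ((dvd_abs _ _).2 hdvd)
        omega
      have hb := sin_sq_lb_even M hM4 (by exact_mod_cast h2M) _ h2d hnd
      refine le_trans (min_le_left _ _) ?_
      nlinarith [mul_self_le_mul_self (sq_nonneg (Real.sin (2*π/(M:ℝ)))) hb]
end
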